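/- Define f_a : ℝ → ℝ for a > 0 by f_a(x) = a - |x| if |x| < a and f_a(x) = 0 otherwise. Then f_a converges uniformly to F ≡ 0 as a → 0, each f_a is 1-Lipschitz, and -1 belongs to the set D_F(0) := {v : there exist x_n → 0, a_n → 0 with a_n > 0, f_{a_n} differentiable at x_n, and f_{a_n}'(x_n) → v}; in particular D_F(0) is strictly larger than {0} = ∂F(0). -/

import Mathlib

open Filter Topology

/-- The tent function `f_a(x) = a - |x|` if `|x| < a`, `0` otherwise. -/
noncomputable def tent (a x : ℝ) : ℝ := if |x| < a then a - |x| else 0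

/-- The set of limits of derivatives of `tent a` along sequences `(x_n, a_n) → (0, 0)`. -/
noncomputable def DFtent : Set ℝ :=
  {v : ℝ | ∃ xs as : ℕ → ℝ, Tendsto xs atTop (𝓝 0) ∧ Tendsto as atTop (𝓝 0) ∧
    (∀ n, 0 < as n) ∧ (∀ n, DifferentiableAt ℝ (tent (as n)) (xs n)) ∧
    Tendsto (fun n => deriv (tent (as n)) (xs n)) atTop (𝓝 v)}

lemma tent_eq_max (a x : ℝ) : tent a x = max (a - |x|) 0 := by
  unfold tent
  split_ifs with h
  · rw [max_eq_left]; linarith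
  · rw [max_eq_right]; push_neg at h; linarith

lemma tent_eventually_eq {a x : ℝ} (hx : 0 < x) (hxa : x < a) :
    (fun y => a - y) =ᶠ[𝓝 x] tent a := by
  have : Set.Ioo (0:ℝ) a ∈ 𝓝 x := Ioo_mem_nhds hx hxa
  filter_upwards [this] with y hy
  unfold tent
  rw [abs_of_pos hy.1, if_pos hy.2]

lemma tent_diff {a x : ℝ} (hx : 0 < x) (hxa : x < a) :
    DifferentiableAt ℝ (tent a) x := by
  have h1 : DifferentiableAt ℝ (fun y : ℝ => a - y) x := by fun_prop
  exact h1.congr_of_eventuallyEq (tent_eventually_eq hx hxa).symm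

lemma tent_deriv {a x : ℝ} (hx : 0 < x) (hxa : x < a) :
    deriv (tent a) x = -1 := by
  rw [← (tent_eventually_eq hx hxa).deriv_eq]
  have : deriv (fun y : ℝ => a - y) x = 0 - 1 := by
    rw [deriv_fun_sub (by fun_prop) (by fun_prop), deriv_const, deriv_id'']
  simpa using this


theorem tent_gradient_limit :
    (∀ ε > (0 : ℝ), ∃ δ > (0 : ℝ), ∀ a : ℝ, 0 < a → a < δ → ∀ x : ℝ, |tent a x - 0| < ε) ∧
    (∀ a : ℝ, 0 < a → LipschitzWith 1 (tent a)) ∧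
    (-1 : ℝ) ∈ DFtent ∧ DFtent ≠ ({0} : Set ℝ) := by
  have hx_pos : ∀ n : ℕ, (0:ℝ) < 1 / (2 * (n + 1)) := by
    intro n; positivity
  have hx_lt : ∀ n : ℕ, (1:ℝ) / (2 * (n + 1)) < 1 / (n + 1) := by
    intro n
    have hn : (0:ℝ) < (n:ℝ) + 1 := by positivity
    rw [div_lt_div_iff₀ (by positivity) hn]
    nlinarith
  have hmem : (-1 : ℝ) ∈ DFtent := by
    refine ⟨fun n => 1 / (2 * (n + 1)), fun n => 1 / (n + 1),
      ?_, tendsto_one_div_add_atTop_nhds_zero_nat, fun n => by positivity,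
      fun n => tent_diff (hx_pos n) (hx_lt n), ?_⟩
    · have h1 := tendsto_one_div_add_atTop_nhds_zero_nat.const_mul (1/2 : ℝ)
      rw [mul_zero] at h1
      refine h1.congr fun n => ?_
      field_simp
    · have h : ∀ n : ℕ, deriv (tent ((1:ℝ) / (n + 1))) (1 / (2 * (n + 1))) = -1 :=
        fun n => tent_deriv (hx_pos n) (hx_lt n)
      simp only [h]
      exact tendsto_const_nhds
  refine ⟨?_, ?_, hmem, ?_⟩
  · intro ε hε
    refine ⟨ε, hε, fun a ha haδ x => ?_⟩
    rw [sub_zero, tent_eq_max, abs_of_nonneg (le_max_right _ _)]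
    exact max_lt (by linarith [abs_nonneg x]) hε
  · intro a _
    rw [lipschitzWith_iff_dist_le_mul]
    intro x y
    simp only [Real.dist_eq, one_mul, NNReal.coe_one, tent_eq_max]
    calc |max (a - |x|) 0 - max (a - |y|) 0| ≤ |(a - |x|) - (a - |y|)| :=
          abs_max_sub_max_le_abs _ _ _
      _ = |(|y| - |x|)| := by congr 1; ring
      _ ≤ |y - x| := abs_abs_sub_abs_le_abs_sub _ _
      _ = |x - y| := abs_sub_comm _ _
  · intro h
    rw [h] at hmem
    norm_num at hmem
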